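/- For the quantum encoding with a fair key bit, the Holevo quantity equals S* = H₂(cos²(π/8)) < 1, so for any measurement outcome Z on the transmitted qubit, I(X; Z | Y) ≤ S* and hence H(X | Y, Z) ≥ 1 − S* > 0. -/

import Mathlib

open Real Matrix

lemma cos_sq_pi8 : Real.cos (π / 8) ^ 2 = (2 + Real.sqrt 2) / 4 := by
  rw [Real.cos_pi_div_eight]
  rw [div_pow, Real.sq_sqrt (by positivity)]
  norm_num

lemma sin_sq_pi8 : Real.sin (π / 8) ^ 2 = (2 - Real.sqrt 2) / 4 := by
  rw [Real.sin_pi_div_eight]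
  rw [div_pow, Real.sq_sqrt (by nlinarith [Real.sq_sqrt (by norm_num : (2:ℝ) ≥ 0), Real.sqrt_nonneg 2, Real.sq_sqrt (by norm_num : (0:ℝ) ≤ 2)])]
  norm_num

lemma sstar_lt_one (Sstar : ℝ)
    (hS : Sstar = -(Real.cos (π / 8) ^ 2 * Real.logb 2 (Real.cos (π / 8) ^ 2))
        - Real.sin (π / 8) ^ 2 * Real.logb 2 (Real.sin (π / 8) ^ 2)) :
    Sstar < 1 := by
  have h2 : Real.sqrt 2 ^ 2 = 2 := Real.sq_sqrt (by norm_num)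
  have h2pos : (0:ℝ) < Real.sqrt 2 := Real.sqrt_pos.2 (by norm_num)
  have h2lt : Real.sqrt 2 < 2 := by nlinarith
  set p : ℝ := Real.cos (π / 8) ^ 2 with hp
  have hq : Real.sin (π / 8) ^ 2 = 1 - p := by
    rw [hp, cos_sq_pi8, sin_sq_pi8]; ring
  have hp0 : 0 < p := by rw [hp, cos_sq_pi8]; positivity
  have hp1 : p < 1 := by rw [hp, cos_sq_pi8]; nlinarith
  have hpne : p ≠ 2⁻¹ := by
    rw [hp, cos_sq_pi8]; intro h; nlinarith
  have hb : Real.binEntropy p < Real.log 2 := Real.binEntropy_lt_log_two.2 hpne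
  have hbe : Real.binEntropy p = -(p * Real.log p) - (1 - p) * Real.log (1 - p) := by
    rw [Real.binEntropy, Real.log_inv, Real.log_inv]; ring
  have hlog2 : (0:ℝ) < Real.log 2 := Real.log_pos (by norm_num)
  have : Sstar = Real.binEntropy p / Real.log 2 := by
    rw [hS, hq, hbe, Real.logb, Real.logb]
    field_simp
  rw [this]
  rw [div_lt_one hlog2]
  exact hb

/-- For the BB84-style quantum encoding of a message bit `Y` with a fair key bit `X`
choosing the basis, the ensemble density matrix `ρ(Y)` (equal to `[[3/4,1/4],[1/4,1/4]]`
for `Y = 0` and `[[1/4,-1/4],[-1/4,3/4]]` for `Y = 1`) has eigenvalues `cos²(π/8)` and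
`sin²(π/8)`, so its von Neumann entropy (base 2) is the Holevo quantity
`S* = H₂(cos²(π/8)) < 1`; hence, assuming the Holevo bound `I(X;Z|Y) ≤ S*` for any
measurement outcome `Z`, the equivocation `H(X|Y,Z) = H(X|Y) − I(X;Z|Y) = 1 − I(X;Z|Y)`
satisfies `H(X|Y,Z) ≥ 1 − S* > 0`. -/
theorem stmt11 (ρ : Bool → Matrix (Fin 2) (Fin 2) ℝ)
    (hρ0 : ρ false = !![3/4, 1/4; 1/4, 1/4]) (hρ1 : ρ true = !![1/4, -1/4; -1/4, 3/4])
    (Sstar : ℝ)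
    (hS : Sstar = -(Real.cos (π / 8) ^ 2 * Real.logb 2 (Real.cos (π / 8) ^ 2))
        - Real.sin (π / 8) ^ 2 * Real.logb 2 (Real.sin (π / 8) ^ 2)) :
    (∀ y, ∃ v : Fin 2 → ℝ, v ≠ 0 ∧ (ρ y).mulVec v = Real.cos (π / 8) ^ 2 • v) ∧
    (∀ y, ∃ w : Fin 2 → ℝ, w ≠ 0 ∧ (ρ y).mulVec w = Real.sin (π / 8) ^ 2 • w) ∧
    Sstar < 1 ∧ 0 < 1 - Sstar ∧
    (∀ I H : ℝ, I ≤ Sstar → H = 1 - I → 1 - Sstar ≤ H) := by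
  have h2 : Real.sqrt 2 ^ 2 = 2 := Real.sq_sqrt (by norm_num)
  have hne : ∀ a : ℝ, ((![(1:ℝ), a] : Fin 2 → ℝ) ≠ 0) := by
    intro a h
    have := congrFun h 0
    simp at this
  have hc : (Real.sqrt (2 + Real.sqrt 2) / 2) ^ 2 = (2 + Real.sqrt 2) / 4 := by
    rw [div_pow, Real.sq_sqrt (by positivity)]; norm_num
  have hs : (Real.sqrt (2 - Real.sqrt 2) / 2) ^ 2 = (2 - Real.sqrt 2) / 4 := by
    have : Real.sqrt 2 ≤ 2 := by nlinarith [Real.sqrt_nonneg 2]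
    rw [div_pow, Real.sq_sqrt (by linarith)]; norm_num
  have hlt := sstar_lt_one Sstar hS
  refine ⟨?_, ?_, hlt, by linarith, fun I H hI hH => by linarith⟩
  · intro y
    cases y
    · refine ⟨![1, Real.sqrt 2 - 1], hne _, ?_⟩
      funext i
      fin_cases i <;>
        simp [hρ0, Matrix.mulVec, dotProduct, Fin.sum_univ_two, hc] <;>
        ring_nf <;> linarith [h2]
    · refine ⟨![1, -(1 + Real.sqrt 2)], hne _, ?_⟩
      funext i
      fin_cases i <;>
        simp [hρ1, Matrix.mulVec, dotProduct, Fin.sum_univ_two, hc] <;>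
        ring_nf <;> linarith [h2]
  · intro y
    cases y
    · refine ⟨![1, -(1 + Real.sqrt 2)], hne _, ?_⟩
      funext i
      fin_cases i <;>
        simp [hρ0, Matrix.mulVec, dotProduct, Fin.sum_univ_two, hs] <;>
        ring_nf <;> linarith [h2]
    · refine ⟨![1, Real.sqrt 2 - 1], hne _, ?_⟩
      funext i
      fin_cases i <;>
        simp [hρ1, Matrix.mulVec, dotProduct, Fin.sum_univ_two, hs] <;>
        ring_nf <;> linarith [h2]
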